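/- Fix b ∈ (0, 0.01] and x₃ ∈ [0,1) with 1 − x₃ ≥ √b. With d₂ = −(1−x₃)², d₁ = 2(1−x₃)² − 4b(1−x₃) + 2b²(1+x₃), d₀ = −(1−x₃)² + 4b(1−x₃) − b²(5−2x₃) + b³, one has d₁² − 4d₀d₂ = 4b²(1−x₃)²(1+4x₃)·M where M = 1 − (b/(1−x₃))·(3+5x₃)/(1+4x₃) + (b²/(1−x₃)²)·(1+x₃)²/(1+4x₃), and moreover 1 ≥ M ≥ 1 − 3b/(1−x₃) ≥ 0. -/

import Mathlib

theorem discriminant_identity (b x₃ : ℝ) (hb : 0 < b) (hb1 : b ≤ 0.01)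
    (hx₃ : x₃ ∈ Set.Ico (0:ℝ) 1) (hgap : 1 - x₃ ≥ Real.sqrt b)
    (d₀ d₁ d₂ M : ℝ)
    (hd₂ : d₂ = -(1 - x₃)^2)
    (hd₁ : d₁ = 2 * (1 - x₃)^2 - 4 * b * (1 - x₃) + 2 * b^2 * (1 + x₃))
    (hd₀ : d₀ = -(1 - x₃)^2 + 4 * b * (1 - x₃) - b^2 * (5 - 2 * x₃) + b^3)
    (hM : M = 1 - (b / (1 - x₃)) * (3 + 5 * x₃) / (1 + 4 * x₃)
      + (b^2 / (1 - x₃)^2) * (1 + x₃)^2 / (1 + 4 * x₃)) :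
    d₁^2 - 4 * d₀ * d₂ = 4 * b^2 * (1 - x₃)^2 * (1 + 4 * x₃) * M ∧
      1 ≥ M ∧ M ≥ 1 - 3 * b / (1 - x₃) ∧ 1 - 3 * b / (1 - x₃) ≥ 0 := by
  obtain ⟨hx0, hx1⟩ := hx₃
  have hsb0 : 0 < Real.sqrt b := Real.sqrt_pos.mpr hb
  have hu : 0 < 1 - x₃ := lt_of_lt_of_le hsb0 hgap
  have hsb : Real.sqrt b ≤ 0.1 := by
    have h1 : Real.sqrt b ≤ Real.sqrt 0.01 := Real.sqrt_le_sqrt hb1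
    have h2 : Real.sqrt 0.01 = 0.1 := by
      rw [show (0.01:ℝ) = 0.1^2 by norm_num, Real.sqrt_sq (by norm_num)]
    linarith
  have hbu : b ≤ 0.1 * (1 - x₃) := by
    have hsq : Real.sqrt b * Real.sqrt b = b := Real.mul_self_sqrt hb.le
    nlinarith [mul_le_mul hsb hgap hsb0.le (by norm_num : (0:ℝ) ≤ 0.1)]
  have hden : (0:ℝ) < 1 + 4 * x₃ := by linarith
  have hMu : M * ((1 - x₃)^2 * (1 + 4 * x₃)) =
      (1 - x₃)^2 * (1 + 4 * x₃) - b * (1 - x₃) * (3 + 5 * x₃)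
        + b^2 * (1 + x₃)^2 := by
    rw [hM]; field_simp
  refine ⟨?_, ?_, ?_, ?_⟩
  · rw [hd₀, hd₁, hd₂]
    have : 4 * b^2 * (1 - x₃)^2 * (1 + 4 * x₃) * M =
        4 * b^2 * (M * ((1 - x₃)^2 * (1 + 4 * x₃))) := by ring
    rw [this, hMu]; ring
  · have key : M * ((1 - x₃)^2 * (1 + 4 * x₃)) ≤ (1 - x₃)^2 * (1 + 4 * x₃) := by
      rw [hMu]
      have h1 : b * (b * (1+x₃)^2) ≤ 0.1 * (1 - x₃) * (b * (1+x₃)^2) :=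
        mul_le_mul_of_nonneg_right hbu (by positivity)
      nlinarith [mul_nonneg (mul_nonneg hb.le hu.le) hx0,
        mul_nonneg (mul_nonneg hb.le hu.le) (sq_nonneg x₃),
        mul_nonneg hb.le hu.le]
    have hpos : (0:ℝ) < (1 - x₃)^2 * (1 + 4 * x₃) := by positivity
    nlinarith
  · have key : (1 - 3 * b / (1 - x₃)) * ((1 - x₃)^2 * (1 + 4 * x₃)) ≤
        M * ((1 - x₃)^2 * (1 + 4 * x₃)) := by
      rw [hMu]
      have : (1 - 3 * b / (1 - x₃)) * ((1 - x₃)^2 * (1 + 4 * x₃)) =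
          (1 - x₃)^2 * (1 + 4 * x₃) - 3 * b * (1 - x₃) * (1 + 4 * x₃) := by
        field_simp
      rw [this]
      nlinarith [sq_nonneg (1 + x₃), mul_pos hb hu, mul_nonneg (mul_nonneg hb.le hu.le) hx0]
    have hpos : (0:ℝ) < (1 - x₃)^2 * (1 + 4 * x₃) := by positivity
    nlinarith
  · have : 3 * b / (1 - x₃) ≤ 0.3 := by
      rw [div_le_iff₀ hu]; linarith
    linarith
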